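/- Let n = ab ≥ 6 with a, b ≥ 2, F an algebraically closed field of characteristic p > 0, and G_{a,b} = (S_a ≀ S_b) ∩ A_n where S_a ≀ S_b ≤ S_n preserves the partition of {1,…,n} into b consecutive blocks of size a. Then the invariants (S_1^*)^{G_{a,b}} are zero, unless p = 2 and b = 2, in which case they are nonzero. -/

import Mathlib

/-- `S_1^* = M_1 / ⟨v_1 + ⋯ + v_n⟩`. -/
abbrev S1quot (F : Type) [Field F] (n : ℕ) : Type :=
  (Fin n → F) ⧸ (Submodule.span F {((fun _ => 1) : Fin n → F)})

/-- `σ ∈ S_n` preserves the partition of `{0, …, n−1}` into `b` consecutive blocks of size `a`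
(block of `x` is `⌊x/a⌋`), i.e. `σ ∈ S_a ≀ S_b`. -/
def wreathPres (n a : ℕ) (σ : Equiv.Perm (Fin n)) : Prop :=
  ∀ x y : Fin n, ((x : ℕ) / a = (y : ℕ) / a) ↔ ((σ x : ℕ) / a = (σ y : ℕ) / a)

/-- `q ∈ S_1^*` is invariant under `G_{a,b} = (S_a ≀ S_b) ∩ A_n` (`n = ab`). -/
def S1invW (F : Type) [Field F] (n a : ℕ) (q : S1quot F n) : Prop :=
  ∀ σ : Equiv.Perm (Fin n), σ ∈ alternatingGroup (Fin n) → wreathPres n a σ →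
    ∀ v : Fin n → F, (Submodule.Quotient.mk v : S1quot F n) = q →
      (Submodule.Quotient.mk (v ∘ σ) : S1quot F n) = q

lemma mk_eq_iff {F : Type} [Field F] {n : ℕ} (v w : Fin n → F) :
    (Submodule.Quotient.mk v : S1quot F n) = Submodule.Quotient.mk w ↔
      ∃ c : F, ∀ x, v x = w x + c := by
  rw [Submodule.Quotient.eq, Submodule.mem_span_singleton]
  constructor
  · rintro ⟨c, hc⟩
    refine ⟨c, fun x => ?_⟩
    have := congrFun hc x
    simp only [Pi.smul_apply, Pi.sub_apply, smul_eq_mul, mul_one] at this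
    rw [this]; ring
  · rintro ⟨c, hc⟩
    refine ⟨c, funext fun x => ?_⟩
    simp only [Pi.smul_apply, Pi.sub_apply, smul_eq_mul, mul_one, hc x]
    ring

lemma key_const {F : Type} [Field F] {n a : ℕ} {q : S1quot F n} (hq : S1invW F n a q)
    {v : Fin n → F} (hv : (Submodule.Quotient.mk v : S1quot F n) = q)
    {σ : Equiv.Perm (Fin n)} (hA : σ ∈ alternatingGroup (Fin n)) (hW : wreathPres n a σ)
    {k : ℕ} {x₀ : Fin n} (hfix : (σ ^ k) x₀ = x₀) (hk : (k : F) ≠ 0) :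
    ∀ x, v (σ x) = v x := by
  have h := hq σ hA hW v hv
  rw [← hv, mk_eq_iff] at h
  obtain ⟨c, hc⟩ := h
  simp only [Function.comp_apply] at hc
  have hpow : ∀ (m : ℕ) (x : Fin n), v ((σ ^ m) x) = v x + m * c := by
    intro m
    induction m with
    | zero => simp
    | succ m ih =>
      intro x
      rw [pow_succ, Equiv.Perm.mul_apply, ih (σ x), hc x]
      push_cast; ring
  have h0 := hpow k x₀
  rw [hfix] at h0
  have hc0 : c = 0 := by
    have hkc : (k : F) * c = 0 := left_eq_add.mp h0
    exact (mul_eq_zero.mp hkc).resolve_left hk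
  intro x; rw [hc x, hc0, add_zero]

lemma wreathPres_mul {n a : ℕ} {σ τ : Equiv.Perm (Fin n)}
    (h1 : wreathPres n a σ) (h2 : wreathPres n a τ) : wreathPres n a (σ * τ) :=
  fun x y => (h2 x y).trans (h1 (τ x) (τ y))

/-- a swap within a block does not change block indices -/
lemma swap_block {n a : ℕ} {u w : Fin n} (huw : (u : ℕ) / a = (w : ℕ) / a) (z : Fin n) :
    ((Equiv.swap u w z : Fin n) : ℕ) / a = (z : ℕ) / a := by
  rcases eq_or_ne z u with rfl | hu
  · rw [Equiv.swap_apply_left]; exact huw.symm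
  rcases eq_or_ne z w with rfl | hw
  · rw [Equiv.swap_apply_right]; exact huw
  · rw [Equiv.swap_apply_of_ne_of_ne hu hw]

lemma wreathPres_of_block_id {n a : ℕ} {σ : Equiv.Perm (Fin n)}
    (h : ∀ z, ((σ z : Fin n) : ℕ) / a = (z : ℕ) / a) : wreathPres n a σ := by
  intro x y; rw [h x, h y]

lemma blk_mem {a b r' i : ℕ} (h : r' < b) (hi : i < a) : r' * a + i < a * b :=
  calc r' * a + i < (r' + 1) * a := by rw [add_mul, one_mul]; exact Nat.add_lt_add_left hi _
    _ ≤ b * a := Nat.mul_le_mul_right a h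
    _ = a * b := Nat.mul_comm b a

lemma blk_div {a r' i : ℕ} (ha0 : 0 < a) (hi : i < a) : (r' * a + i) / a = r' := by
  rw [add_comm, Nat.add_mul_div_right _ _ ha0, Nat.div_eq_of_lt hi, zero_add]

lemma exists_not_mem4 {n : ℕ} (hn : 5 ≤ n) (x y u w : Fin n) :
    ∃ z : Fin n, z ≠ x ∧ z ≠ y ∧ z ≠ u ∧ z ≠ w := by
  by_contra h
  push_neg at h
  have hsub : (Finset.univ : Finset (Fin n)) ⊆ {x, y, u, w} := by
    intro z _
    simp only [Finset.mem_insert, Finset.mem_singleton]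
    by_contra hz
    push_neg at hz
    exact hz.2.2.2 (h z hz.1 hz.2.1 hz.2.2.1)
  have hcard := Finset.card_le_card hsub
  rw [Finset.card_univ, Fintype.card_fin] at hcard
  have h4 : ({x, y, u, w} : Finset (Fin n)).card ≤ 4 := by
    refine le_trans (Finset.card_insert_le _ _) (Nat.succ_le_succ ?_)
    refine le_trans (Finset.card_insert_le _ _) (Nat.succ_le_succ ?_)
    refine le_trans (Finset.card_insert_le _ _) (Nat.succ_le_succ ?_)
    simp
  omega

lemma same_block_const {F : Type} [Field F] {a b : ℕ} (ha : 2 ≤ a) (hb : 2 ≤ b)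
    (hn : 6 ≤ a * b) {q : S1quot F (a*b)} (hq : S1invW F (a*b) a q)
    {v : Fin (a*b) → F} (hv : (Submodule.Quotient.mk v : S1quot F (a*b)) = q) :
    ∀ x y : Fin (a*b), (x:ℕ)/a = (y:ℕ)/a → v x = v y := by
  have ha0 : 0 < a := by omega
  intro x y hxy
  rcases eq_or_ne x y with rfl | hne
  · rfl
  set r := (x:ℕ)/a with hr
  have hrb : r < b := (Nat.div_lt_iff_lt_mul ha0).mpr
    (lt_of_lt_of_le x.isLt (le_of_eq (mul_comm a b)))
  obtain ⟨r', hr'b, hr'⟩ : ∃ r', r' < b ∧ r' ≠ r := by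
    rcases eq_or_ne r 0 with h0 | h0
    · exact ⟨1, by omega, by rw [h0]; exact one_ne_zero⟩
    · exact ⟨0, by omega, fun h => h0 h.symm⟩
  set u : Fin (a*b) := ⟨r' * a, blk_mem (i := 0) hr'b (by omega)⟩ with hu
  set w : Fin (a*b) := ⟨r' * a + 1, blk_mem (i := 1) hr'b (by omega)⟩ with hw
  have hub : ((u : Fin (a*b)) : ℕ) / a = r' := by
    show (r' * a) / a = r'
    have : r' * a + 0 = r' * a := by omega
    rw [← this]
    exact blk_div (i := 0) ha0 (by omega)
  have hwb : ((w : Fin (a*b)) : ℕ) / a = r' := blk_div (i := 1) ha0 (by omega)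
  have hux : u ≠ x := by intro h; apply hr'; rw [← hub, h]
  have huy : u ≠ y := by intro h; apply hr'; rw [← hub, h]; exact hxy.symm
  have hwx : w ≠ x := by intro h; apply hr'; rw [← hwb, h]
  have hwy : w ≠ y := by intro h; apply hr'; rw [← hwb, h]; exact hxy.symm
  have huw : u ≠ w := by
    intro h
    have := congrArg Fin.val h
    simp [hu, hw] at this
  set σ : Equiv.Perm (Fin (a*b)) := Equiv.swap x y * Equiv.swap u w with hσ
  have hσA : σ ∈ alternatingGroup (Fin (a*b)) := by
    rw [Equiv.Perm.mem_alternatingGroup, hσ, Equiv.Perm.sign_mul,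
      Equiv.Perm.sign_swap hne, Equiv.Perm.sign_swap huw]
    decide
  have hσW : wreathPres (a*b) a σ := by
    apply wreathPres_mul
    · exact wreathPres_of_block_id fun z => swap_block hxy z
    · exact wreathPres_of_block_id fun z => swap_block (hub.trans hwb.symm) z
  obtain ⟨z, hz1, hz2, hz3, hz4⟩ := exists_not_mem4 (by omega) x y u w
  have hfix : (σ ^ 1) z = z := by
    rw [pow_one, hσ, Equiv.Perm.mul_apply, Equiv.swap_apply_of_ne_of_ne hz3 hz4,
      Equiv.swap_apply_of_ne_of_ne hz1 hz2]
  have hkey := key_const hq hv hσA hσW hfix (by norm_num : ((1:ℕ) : F) ≠ 0)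
  have hσx : σ x = y := by
    rw [hσ, Equiv.Perm.mul_apply, Equiv.swap_apply_of_ne_of_ne (Ne.symm hux) (Ne.symm hwx),
      Equiv.swap_apply_left]
  have := hkey x
  rw [hσx] at this
  exact this.symm

lemma blk_mod {a r' i : ℕ} (hi : i < a) : (r' * a + i) % a = i := by
  rw [add_comm, Nat.add_mul_mod_self_right, Nat.mod_eq_of_lt hi]

/-- the block-swap involution -/
def bswapf {a b : ℕ} (r s : ℕ) (hr : r < b) (hs : s < b) (ha0 : 0 < a)
    (x : Fin (a*b)) : Fin (a*b) :=
  if (x : ℕ) / a = r then ⟨s * a + (x : ℕ) % a, blk_mem hs (Nat.mod_lt _ ha0)⟩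
  else if (x : ℕ) / a = s then ⟨r * a + (x : ℕ) % a, blk_mem hr (Nat.mod_lt _ ha0)⟩
  else x


variable {a b : ℕ} {r s : ℕ}

lemma bswapf_val_r (hr : r < b) (hs : s < b) (ha0 : 0 < a) {z : Fin (a*b)}
    (h : (z : ℕ) / a = r) :
    ((bswapf r s hr hs ha0 z : Fin (a*b)) : ℕ) = s * a + (z : ℕ) % a := by
  unfold bswapf; rw [if_pos h]

lemma bswapf_val_s (hr : r < b) (hs : s < b) (ha0 : 0 < a) (hrs : r ≠ s) {z : Fin (a*b)}
    (h : (z : ℕ) / a = s) :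
    ((bswapf r s hr hs ha0 z : Fin (a*b)) : ℕ) = r * a + (z : ℕ) % a := by
  unfold bswapf; rw [if_neg (by rw [h]; exact Ne.symm hrs), if_pos h]

lemma bswapf_id (hr : r < b) (hs : s < b) (ha0 : 0 < a) {z : Fin (a*b)}
    (h1 : (z : ℕ) / a ≠ r) (h2 : (z : ℕ) / a ≠ s) :
    bswapf r s hr hs ha0 z = z := by
  unfold bswapf; rw [if_neg h1, if_neg h2]

lemma bswapf_div (hr : r < b) (hs : s < b) (ha0 : 0 < a) (hrs : r ≠ s) (z : Fin (a*b)) :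
    ((bswapf r s hr hs ha0 z : Fin (a*b)) : ℕ) / a =
      if (z : ℕ) / a = r then s else if (z : ℕ) / a = s then r else (z : ℕ) / a := by
  rcases eq_or_ne ((z : ℕ) / a) r with h1 | h1
  · rw [if_pos h1, bswapf_val_r hr hs ha0 h1]
    exact blk_div ha0 (Nat.mod_lt _ ha0)
  rcases eq_or_ne ((z : ℕ) / a) s with h2 | h2
  · rw [if_neg h1, if_pos h2, bswapf_val_s hr hs ha0 hrs h2]
    exact blk_div ha0 (Nat.mod_lt _ ha0)
  · rw [if_neg h1, if_neg h2, bswapf_id hr hs ha0 h1 h2]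

lemma bswapf_invol (hr : r < b) (hs : s < b) (ha0 : 0 < a) (hrs : r ≠ s) :
    Function.Involutive (bswapf r s hr hs ha0) := by
  intro z
  rcases eq_or_ne ((z : ℕ) / a) r with h1 | h1
  · have hd : ((bswapf r s hr hs ha0 z : Fin (a*b)) : ℕ) / a = s := by
      rw [bswapf_val_r hr hs ha0 h1]; exact blk_div ha0 (Nat.mod_lt _ ha0)
    apply Fin.ext
    rw [bswapf_val_s hr hs ha0 hrs hd, bswapf_val_r hr hs ha0 h1, blk_mod (Nat.mod_lt _ ha0),
      mul_comm, ← h1]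
    exact Nat.div_add_mod _ a
  rcases eq_or_ne ((z : ℕ) / a) s with h2 | h2
  · have hd : ((bswapf r s hr hs ha0 z : Fin (a*b)) : ℕ) / a = r := by
      rw [bswapf_val_s hr hs ha0 hrs h2]; exact blk_div ha0 (Nat.mod_lt _ ha0)
    apply Fin.ext
    rw [bswapf_val_r hr hs ha0 hd, bswapf_val_s hr hs ha0 hrs h2, blk_mod (Nat.mod_lt _ ha0),
      mul_comm, ← h2]
    exact Nat.div_add_mod _ a
  · rw [bswapf_id hr hs ha0 h1 h2, bswapf_id hr hs ha0 h1 h2]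

lemma blkmap_inj (r s : ℕ) : Function.Injective
    (fun m => if m = r then s else if m = s then r else m : ℕ → ℕ) := by
  intro m1 m2 h
  simp only at h
  split_ifs at h <;> omega

lemma bswapf_wreath (hr : r < b) (hs : s < b) (ha0 : 0 < a) (hrs : r ≠ s) :
    wreathPres (a*b) a (Function.Involutive.toPerm _ (bswapf_invol hr hs ha0 hrs)) := by
  intro x y
  have hx := bswapf_div hr hs ha0 hrs x
  have hy := bswapf_div hr hs ha0 hrs y
  show ((x:ℕ)/a = (y:ℕ)/a) ↔
    (((bswapf r s hr hs ha0 x : Fin (a*b)) : ℕ)/a = ((bswapf r s hr hs ha0 y : Fin (a*b)) : ℕ)/a)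
  rw [hx, hy]
  constructor
  · intro h; rw [h]
  · intro h; exact blkmap_inj r s h

lemma cross_block {F : Type} [Field F] {a b : ℕ} (ha : 2 ≤ a) (hb : 2 ≤ b)
    (hn : 6 ≤ a * b) (hD : 3 ≤ b ∨ (2 : F) ≠ 0)
    {q : S1quot F (a*b)} (hq : S1invW F (a*b) a q)
    {v : Fin (a*b) → F} (hv : (Submodule.Quotient.mk v : S1quot F (a*b)) = q)
    {r s : ℕ} (hr : r < b) (hs : s < b) (hrs : r ≠ s) :
    ∀ x y : Fin (a*b), (x:ℕ)/a = r → (y:ℕ)/a = s → v x = v y := by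
  have ha0 : 0 < a := by omega
  intro x y hx hy
  set σ₀ : Equiv.Perm (Fin (a*b)) :=
    Function.Involutive.toPerm _ (bswapf_invol hr hs ha0 hrs) with hσ₀
  have hσ₀app : ∀ z, σ₀ z = bswapf r s hr hs ha0 z := fun z => rfl
  have hσ₀W : wreathPres (a*b) a σ₀ := bswapf_wreath hr hs ha0 hrs
  -- the parity-fixing transposition inside block s
  set ts1 : Fin (a*b) := ⟨s * a, blk_mem (i := 0) hs ha0⟩ with hts1
  set ts2 : Fin (a*b) := ⟨s * a + 1, blk_mem (i := 1) hs (by omega)⟩ with hts2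
  have hts1d : ((ts1 : Fin (a*b)) : ℕ) / a = s := blk_div (i := 0) ha0 ha0
  have hts2d : ((ts2 : Fin (a*b)) : ℕ) / a = s := blk_div (i := 1) ha0 (by omega)
  have hts12 : ts1 ≠ ts2 := by
    intro h
    have := congrArg Fin.val h
    simp [hts1, hts2] at this
  set t : Equiv.Perm (Fin (a*b)) := Equiv.swap ts1 ts2 with ht
  have htW : wreathPres (a*b) a t :=
    wreathPres_of_block_id fun z => swap_block (hts1d.trans hts2d.symm) z
  have hfixt : ∀ z : Fin (a*b), (z : ℕ) / a ≠ s → t z = z := by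
    intro z hz
    refine Equiv.swap_apply_of_ne_of_ne ?_ ?_
    · intro h; exact hz (by rw [h]; exact hts1d)
    · intro h; exact hz (by rw [h]; exact hts2d)
  -- choose τ even
  obtain ⟨τ, hτA, hτW, hτr⟩ :
      ∃ τ : Equiv.Perm (Fin (a*b)), τ ∈ alternatingGroup (Fin (a*b)) ∧
        wreathPres (a*b) a τ ∧ (τ = σ₀ ∨ τ = σ₀ * t) := by
    rcases Int.units_eq_one_or (Equiv.Perm.sign σ₀) with hsg | hsg
    · exact ⟨σ₀, Equiv.Perm.mem_alternatingGroup.mpr hsg, hσ₀W, Or.inl rfl⟩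
    · refine ⟨σ₀ * t, ?_, wreathPres_mul hσ₀W htW, Or.inr rfl⟩
      rw [Equiv.Perm.mem_alternatingGroup, Equiv.Perm.sign_mul, hsg, ht,
        Equiv.Perm.sign_swap hts12]
      decide
  -- τ agrees with σ₀ outside block s
  have hτeq : ∀ z : Fin (a*b), (z : ℕ) / a ≠ s → τ z = σ₀ z := by
    intro z hz
    rcases hτr with rfl | rfl
    · rfl
    · rw [Equiv.Perm.mul_apply, hfixt z hz]
  -- v ∘ τ = v
  have hkey : ∀ z, v (τ z) = v z := by
    rcases le_or_gt 3 b with h3 | h3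
    · -- a block m avoiding r and s exists; τ fixes its first element
      obtain ⟨m, hmb, hmr, hms⟩ : ∃ m, m < b ∧ m ≠ r ∧ m ≠ s := by
        rcases eq_or_ne r 0 with rfl | h0
        · rcases eq_or_ne s 1 with rfl | h1
          · exact ⟨2, by omega, by omega, by omega⟩
          · exact ⟨1, by omega, by omega, fun h => h1 h.symm⟩
        · rcases eq_or_ne s 0 with rfl | h1
          · rcases eq_or_ne r 1 with rfl | h2
            · exact ⟨2, by omega, by omega, by omega⟩
            · exact ⟨1, by omega, fun h => h2 h.symm, by omega⟩
          · exact ⟨0, by omega, fun h => h0 h.symm, fun h => h1 h.symm⟩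
      set z₀ : Fin (a*b) := ⟨m * a, blk_mem (i := 0) hmb ha0⟩ with hz₀
      have hz₀d : ((z₀ : Fin (a*b)) : ℕ) / a = m := blk_div (i := 0) ha0 ha0
      have hfix : (τ ^ 1) z₀ = z₀ := by
        rw [pow_one, hτeq z₀ (by rw [hz₀d]; exact hms), hσ₀app,
          bswapf_id hr hs ha0 (by rw [hz₀d]; exact hmr) (by rw [hz₀d]; exact hms)]
      exact key_const hq hv hτA hτW hfix (by norm_num)
    · -- b = 2, so a ≥ 3 and char ≠ 2; τ² fixes the third element of block r
      have hb2 : b = 2 := by omega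
      have ha3 : 3 ≤ a := by nlinarith
      have h2F : (2 : F) ≠ 0 := hD.resolve_left (by omega)
      set z₀ : Fin (a*b) := ⟨r * a + 2, blk_mem hr (by omega)⟩ with hz₀
      have hz₀d : ((z₀ : Fin (a*b)) : ℕ) / a = r := blk_div ha0 (by omega)
      have hz₀s : ((z₀ : Fin (a*b)) : ℕ) / a ≠ s := by rw [hz₀d]; exact hrs
      -- σ₀ z₀ lands at s*a+2
      have hσz₀ : ((σ₀ z₀ : Fin (a*b)) : ℕ) = s * a + 2 := by
        rw [hσ₀app, bswapf_val_r hr hs ha0 hz₀d]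
        congr 1
        show (r * a + 2) % a = 2
        exact blk_mod (by omega)
      have hσz₀d : ((σ₀ z₀ : Fin (a*b)) : ℕ) / a = s := by
        rw [hσz₀]; exact blk_div ha0 (by omega)
      have hfix : (τ ^ 2) z₀ = z₀ := by
        rcases hτr with rfl | rfl
        · rw [sq, Equiv.Perm.mul_apply, hσ₀app, hσ₀app]
          exact bswapf_invol hr hs ha0 hrs z₀
        · rw [sq, Equiv.Perm.mul_apply, Equiv.Perm.mul_apply, Equiv.Perm.mul_apply,
            hfixt z₀ hz₀s]
          have htσ : t (σ₀ z₀) = σ₀ z₀ := by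
            refine Equiv.swap_apply_of_ne_of_ne ?_ ?_
            · intro h; have := congrArg Fin.val h; rw [hσz₀] at this
              simp [hts1] at this
            · intro h; have := congrArg Fin.val h; rw [hσz₀] at this
              simp [hts2] at this
          rw [htσ, hσ₀app, hσ₀app]
          exact bswapf_invol hr hs ha0 hrs z₀
      refine key_const hq hv hτA hτW hfix ?_
      rw [Nat.cast_ofNat]
      exact h2F
  -- conclude
  have h1 : v (τ x) = v x := hkey x
  have h2 : τ x = σ₀ x := hτeq x (by rw [hx]; exact hrs)
  have h3 : ((σ₀ x : Fin (a*b)) : ℕ) / a = s := by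
    rw [hσ₀app, bswapf_val_r hr hs ha0 hx]
    exact blk_div ha0 (Nat.mod_lt _ ha0)
  have h4 : v (σ₀ x) = v y := same_block_const ha hb hn hq hv _ _ (by rw [h3, hy])
  rw [h2, h4] at h1
  exact h1.symm

lemma nat_lt_two {m : ℕ} (h : m < 2) : m = 0 ∨ m = 1 := by omega

lemma part2 {F : Type} [Field F] {a : ℕ} (ha : 2 ≤ a) (h2F : (2 : F) = 0) :
    ∃ q : S1quot F (a*2), q ≠ 0 ∧ S1invW F (a*2) a q := by
  have ha0 : 0 < a := by omega
  have hn2 : ∀ x : Fin (a*2), (x:ℕ)/a < 2 :=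
    fun x => (Nat.div_lt_iff_lt_mul ha0).mpr (lt_of_lt_of_le x.isLt (le_of_eq (mul_comm a 2)))
  set v : Fin (a*2) → F := fun x => if (x:ℕ)/a = 0 then 1 else 0 with hvdef
  have hv0 : v ⟨0, by omega⟩ = 1 := by simp [hvdef]
  have hv1 : v ⟨a, by omega⟩ = 0 := by simp [hvdef, Nat.div_self ha0, -Nat.div_eq_zero_iff]
  refine ⟨Submodule.Quotient.mk v, ?_, ?_⟩
  · intro h0
    rw [Submodule.Quotient.mk_eq_zero, Submodule.mem_span_singleton] at h0
    obtain ⟨c, hc⟩ := h0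
    have e0 := congrFun hc ⟨0, by omega⟩
    have e1 := congrFun hc ⟨a, by omega⟩
    rw [hv0] at e0
    rw [hv1] at e1
    simp only [Pi.smul_apply, smul_eq_mul, mul_one] at e0 e1
    rw [e1] at e0
    exact one_ne_zero e0.symm
  · intro σ hA hW v' hv'
    rw [mk_eq_iff] at hv'
    obtain ⟨c, hc⟩ := hv'
    have hblk : ∃ c'' : F, ∀ x, v (σ x) = v x + c'' := by
      have key : ∀ x : Fin (a*2),
          ((x:ℕ)/a = 0) ↔ ((σ x : ℕ)/a = ((σ ⟨0, by omega⟩ : Fin (a*2)) : ℕ)/a) := by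
        intro x
        have h := hW x ⟨0, by omega⟩
        simpa [Nat.zero_div] using h
      have hd2 : ((σ ⟨0, by omega⟩ : Fin (a*2)) : ℕ)/a = 0 ∨
          ((σ ⟨0, by omega⟩ : Fin (a*2)) : ℕ)/a = 1 := by
        exact nat_lt_two (hn2 _)
      rcases hd2 with hd | hd
      · refine ⟨0, fun x => ?_⟩
        rw [add_zero]
        by_cases hx0 : (x:ℕ)/a = 0
        · have hs0 : (σ x : ℕ)/a = 0 := ((key x).mp hx0).trans hd
          simp [hvdef, hx0, hs0, -Nat.div_eq_zero_iff]
        · have hs0 : (σ x : ℕ)/a ≠ 0 := fun h => hx0 ((key x).mpr (h.trans hd.symm))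
          simp [hvdef, hx0, hs0, -Nat.div_eq_zero_iff]
      · refine ⟨1, fun x => ?_⟩
        by_cases hx0 : (x:ℕ)/a = 0
        · have hs1 : (σ x : ℕ)/a = 1 := ((key x).mp hx0).trans hd
          have l1 : v (σ x) = 0 := by simp [hvdef, hs1, -Nat.div_eq_zero_iff]
          have l2 : v x = 1 := by simp [hvdef, hx0, -Nat.div_eq_zero_iff]
          rw [l1, l2, one_add_one_eq_two, h2F]
        · have hs1 : (σ x : ℕ)/a ≠ 1 := fun h => hx0 ((key x).mpr (h.trans hd.symm))
          have hs0 : (σ x : ℕ)/a = 0 := (nat_lt_two (hn2 (σ x))).resolve_right hs1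
          have l1 : v (σ x) = 1 := by simp [hvdef, hs0, -Nat.div_eq_zero_iff]
          have l2 : v x = 0 := by simp [hvdef, hx0, -Nat.div_eq_zero_iff]
          rw [l1, l2, zero_add]
    obtain ⟨c'', hc''⟩ := hblk
    rw [mk_eq_iff]
    refine ⟨c'' + c, fun x => ?_⟩
    show v' (σ x) = v x + (c'' + c)
    rw [hc (σ x), hc'' x]
    ring

theorem stmt_12' (F : Type) [Field F] (p : ℕ) [Fact p.Prime] [CharP F p]
    (a b : ℕ) (ha : 2 ≤ a) (hb : 2 ≤ b) (hn : 6 ≤ a * b) :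
    (¬(p = 2 ∧ b = 2) → ∀ q : S1quot F (a * b), S1invW F (a * b) a q → q = 0) ∧
    ((p = 2 ∧ b = 2) → ∃ q : S1quot F (a * b), q ≠ 0 ∧ S1invW F (a * b) a q) := by
  constructor
  · intro hne q hq
    obtain ⟨v, hv⟩ := Submodule.Quotient.mk_surjective _ q
    have hD : 3 ≤ b ∨ (2:F) ≠ 0 := by
      rcases le_or_gt 3 b with h | h
      · exact Or.inl h
      · right
        intro h2
        have hdvd : p ∣ 2 := (CharP.cast_eq_zero_iff F p 2).mp (by rwa [Nat.cast_ofNat])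
        have hp2 : p = 2 := (Nat.prime_dvd_prime_iff_eq Fact.out Nat.prime_two).mp hdvd
        exact hne ⟨hp2, by omega⟩
    have ha0 : 0 < a := by omega
    have hconst : ∀ x y : Fin (a*b), v x = v y := by
      intro x y
      rcases eq_or_ne ((x:ℕ)/a) ((y:ℕ)/a) with hxy | hxy
      · exact same_block_const ha hb hn hq hv x y hxy
      · exact cross_block ha hb hn hD hq hv
          ((Nat.div_lt_iff_lt_mul ha0).mpr (lt_of_lt_of_le x.isLt (le_of_eq (mul_comm a b))))
          ((Nat.div_lt_iff_lt_mul ha0).mpr (lt_of_lt_of_le y.isLt (le_of_eq (mul_comm a b))))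
          hxy x y rfl rfl
    rw [← hv, Submodule.Quotient.mk_eq_zero, Submodule.mem_span_singleton]
    refine ⟨v ⟨0, by omega⟩, funext fun x => ?_⟩
    simp only [Pi.smul_apply, smul_eq_mul, mul_one]
    exact hconst ⟨0, by omega⟩ x
  · rintro ⟨hp2, hb2⟩
    have h2F : (2 : F) = 0 := by
      have := CharP.cast_eq_zero F p
      rw [hp2] at this
      rwa [Nat.cast_ofNat] at this
    subst hb2
    exact part2 ha h2F

/-- For `n = ab ≥ 6` with `a, b ≥ 2`, the invariants `(S_1^*)^{G_{a,b}}` are zero, unless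
`p = 2` and `b = 2`, in which case they are nonzero. -/
theorem stmt_12 (F : Type) [Field F] [IsAlgClosed F] (p : ℕ) [Fact p.Prime] [CharP F p]
    (a b : ℕ) (ha : 2 ≤ a) (hb : 2 ≤ b) (hn : 6 ≤ a * b) :
    (¬(p = 2 ∧ b = 2) → ∀ q : S1quot F (a * b), S1invW F (a * b) a q → q = 0) ∧
    ((p = 2 ∧ b = 2) → ∃ q : S1quot F (a * b), q ≠ 0 ∧ S1invW F (a * b) a q) := by
  exact stmt_12' F p a b ha hb hn
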